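/- Let k ⊆ K be fields, let V be a K-vector space, and let U be a k-subspace of V (viewing V as a k-vector space by restriction of scalars). Suppose there exists ℓ ≥ 1 such that the k-span (inside the ℓ-th exterior power of V over K, viewed as a k-vector space by restriction of scalars) of the set {u₁ ∧ ⋯ ∧ u_ℓ : u₁, …, u_ℓ ∈ U} is finite-dimensional over k and nonzero. Then U is finite-dimensional over k. -/

import Mathlib

open ExteriorAlgebra Function

section aux
variable {K V : Type*} [Field K] [AddCommGroup V] [Module K V]

theorem aux_ιMulti_ne_zero {m : ℕ} {v : Fin m → V}
    (hv : LinearIndependent K v) : ExteriorAlgebra.ιMulti K m v ≠ 0 := by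
  classical
  have hv' : LinearIndepOn K id (Set.range v) := (linearIndepOn_id_range_iff hv.injective).mpr hv
  let b : Module.Basis _ K V := Module.Basis.extend hv'
  have hmem : ∀ i, v i ∈ hv'.extend (Set.subset_univ _) :=
    fun i => hv'.subset_extend _ ⟨i, rfl⟩
  let idx : Fin m → hv'.extend (Set.subset_univ _) := fun i => ⟨v i, hmem i⟩
  let G : V →ₗ[K] (Fin m → K) := LinearMap.pi fun i => b.coord (idx i)
  let f : V [⋀^Fin m]→ₗ[K] K := Matrix.detRowAlternating.compLinearMap G
  have hf : f v = 1 := by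
    have hmat : (fun i => G (v i)) = (1 : Matrix (Fin m) (Fin m) K) := by
      ext i j
      have hb : b (idx i) = v i := Module.Basis.extend_apply_self hv' (idx i)
      simp only [G, LinearMap.pi_apply, Module.Basis.coord_apply, ← hb, Module.Basis.repr_self]
      rw [Finsupp.single_apply, Matrix.one_apply]
      congr 1
      simp only [eq_iff_iff]
      constructor
      · intro h; exact (hv.injective (Subtype.ext_iff.mp h)).symm ▸ rfl
      · intro h; rw [h]
    show Matrix.detRowAlternating (fun i => G (v i)) = 1
    rw [hmat]
    exact Matrix.det_one
  intro h0
  let fam : ∀ i : ℕ, V [⋀^Fin i]→ₗ[K] K := Function.update (fun _ => 0) m f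
  have := ExteriorAlgebra.liftAlternating_apply_ιMulti fam v
  rw [h0, map_zero] at this
  have hfm : fam m = f := by simp [fam]
  rw [hfm, hf] at this
  exact one_ne_zero this.symm

theorem aux_linearIndependent_of_ne_zero {m : ℕ} {v : Fin m → V}
    (h : ExteriorAlgebra.ιMulti K m v ≠ 0) : LinearIndependent K v := by
  by_contra hc
  exact h ((ExteriorAlgebra.ιMulti K m).map_linearDependent v hc)

end aux

section step
variable {k K V : Type*} [Field k] [Field K] [Algebra k K]
    [AddCommGroup V] [Module K V] [Module k V] [IsScalarTower k K V]

/-- The `k`-linear map `x ↦ y₀ ∧ ⋯ ∧ x ∧ ⋯ ∧ y_{ℓ-1}` (x in slot `j`). -/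
noncomputable def slotMap (k : Type*) [Field k] [Algebra k K] [Module k V]
    [IsScalarTower k K V] (ℓ : ℕ) (y : Fin ℓ → V) (j : Fin ℓ) :
    V →ₗ[k] ExteriorAlgebra K V :=
  ((ExteriorAlgebra.ιMulti K ℓ).toMultilinearMap.toLinearMap y j).restrictScalars k

@[simp] lemma slotMap_apply (ℓ : ℕ) (y : Fin ℓ → V) (j : Fin ℓ) (x : V) :
    slotMap (K := K) k ℓ y j x = ExteriorAlgebra.ιMulti K ℓ (Function.update y j x) := rfl

theorem step_lemma (U : Submodule k V) (ℓ : ℕ)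
    (B : Submodule k (ExteriorAlgebra K V))
    (hB : B = Submodule.span k
      {x : ExteriorAlgebra K V | ∃ u : Fin ℓ → V, (∀ i, u i ∈ U) ∧
        x = (List.ofFn fun i => ExteriorAlgebra.ι K (u i)).prod})
    (hfin : FiniteDimensional k B)
    (U' : Submodule k V) (hU' : U' ≤ U) (y : Fin ℓ → V) (hy : ∀ i, y i ∈ U) (j : Fin ℓ)
    (hker : FiniteDimensional k ↥(U' ⊓ LinearMap.ker (slotMap (K := K) k ℓ y j))) :
    FiniteDimensional k ↥U' := by
  classical
  set g := slotMap (K := K) k ℓ y j with hg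
  let h : ↥U' →ₗ[k] ExteriorAlgebra K V := g.comp U'.subtype
  have hrange : LinearMap.range h ≤ B := by
    rw [hB]
    rintro _ ⟨x, rfl⟩
    apply Submodule.subset_span
    refine ⟨Function.update y j x, fun i => ?_, ?_⟩
    · rcases eq_or_ne i j with rfl | hij
      · rw [Function.update_self]; exact hU' x.2
      · rw [Function.update_of_ne hij]; exact hy i
    · rw [← ExteriorAlgebra.ιMulti_apply]; rfl
  haveI : FiniteDimensional k ↥(LinearMap.range h) :=
    Submodule.finiteDimensional_of_le hrange
  haveI : FiniteDimensional k ↥(LinearMap.ker h) := by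
    have hkereq : LinearMap.ker h =
        Submodule.comap U'.subtype (U' ⊓ LinearMap.ker g) := by
      rw [Submodule.comap_inf, Submodule.comap_subtype_self, top_inf_eq, LinearMap.ker_comp]
    rw [hkereq]
    exact (Submodule.comapSubtypeEquivOfLe (inf_le_left :
      U' ⊓ LinearMap.ker g ≤ U')).symm.finiteDimensional
  have hrk := LinearMap.lift_rank_range_add_rank_ker h
  have hlt : Cardinal.lift.{_} (Module.rank k ↥U') < Cardinal.aleph0 := by
    rw [← hrk]
    exact Cardinal.add_lt_aleph0 ((Cardinal.lift_lt_aleph0).2 (Module.rank_lt_aleph0 k _))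
      ((Cardinal.lift_lt_aleph0).2 (Module.rank_lt_aleph0 k _))
  rw [Cardinal.lift_lt_aleph0] at hlt
  exact IsNoetherian.iff_fg.1 (IsNoetherian.iff_rank_lt_aleph0.2 hlt)

theorem descent_lemma (U : Submodule k V) (ℓ : ℕ)
    (B : Submodule k (ExteriorAlgebra K V))
    (hB : B = Submodule.span k
      {x : ExteriorAlgebra K V | ∃ u : Fin ℓ → V, (∀ i, u i ∈ U) ∧
        x = (List.ofFn fun i => ExteriorAlgebra.ι K (u i)).prod})
    (hfin : FiniteDimensional k B)
    (step : ∀ (U' : Submodule k V), U' ≤ U → ∀ y : Fin ℓ → V, (∀ i, y i ∈ U) → ∀ j : Fin ℓ,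
        FiniteDimensional k ↥(U' ⊓ LinearMap.ker (slotMap (K := K) k ℓ y j)) →
        FiniteDimensional k ↥U')
    (m : ℕ) : m ≤ ℓ → ∀ (U' : Submodule k V), U' ≤ U →
    ∀ y : Fin ℓ → V, (∀ i, y i ∈ U) → ExteriorAlgebra.ιMulti K ℓ y ≠ 0 →
    (U' ≤ (Submodule.span K (y '' {i : Fin ℓ | (i : ℕ) < m})).restrictScalars k) →
    FiniteDimensional k ↥U' := by
  classical
  induction m with
  | zero =>
    intro _ U' _ y _ _ hspan
    have hempty : (y '' {i : Fin ℓ | (i : ℕ) < 0}) = ∅ := by simp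
    rw [hempty, Submodule.span_empty] at hspan
    have : U' = ⊥ := le_bot_iff.1 hspan
    rw [this]; infer_instance
  | succ m ih =>
    intro hmℓ U' hU' y hy hy0 hspan
    have hmlt : m < ℓ := hmℓ
    set j : Fin ℓ := ⟨m, hmlt⟩ with hj
    set g := slotMap (K := K) k ℓ y j with hg
    set U'' := U' ⊓ LinearMap.ker g with hU''
    have hfinker : FiniteDimensional k ↥U'' := by
      apply ih (le_of_lt hmlt) U'' (le_trans inf_le_left hU') y hy hy0
      intro x hx
      obtain ⟨hxU', hxker⟩ := hx
      have hx1 : x ∈ Submodule.span K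
          (Set.range fun i : Fin (m+1) => y (Fin.castLE hmℓ i)) := by
        have himg : y '' {i : Fin ℓ | (i : ℕ) < m+1}
            = Set.range fun i : Fin (m+1) => y (Fin.castLE hmℓ i) := by
          ext z
          constructor
          · rintro ⟨i, hi, rfl⟩
            exact ⟨⟨(i : ℕ), hi⟩, by congr 1⟩
          · rintro ⟨i, rfl⟩
            exact ⟨Fin.castLE hmℓ i, i.isLt, rfl⟩
        rw [← himg]
        exact hspan hxU'
      obtain ⟨c, hc⟩ := (Submodule.mem_span_range_iff_exists_fun K).1 hx1
      have h0 : ExteriorAlgebra.ιMulti K ℓ (Function.update y j x) = 0 := by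
        have := (LinearMap.mem_ker.1 hxker)
        rwa [hg, slotMap_apply] at this
      -- expand by linearity
      let F : V →ₗ[K] ExteriorAlgebra K V :=
        (ExteriorAlgebra.ιMulti K ℓ).toMultilinearMap.toLinearMap y j
      have hF : ∀ z, F z = ExteriorAlgebra.ιMulti K ℓ (Function.update y j z) := fun _ => rfl
      have hFx : F x = 0 := by rw [hF, h0]
      have hterm : ∀ i : Fin (m+1), (i : ℕ) < m →
          F (y (Fin.castLE hmℓ i)) = 0 := by
        intro i hi
        rw [hF]
        have hne : Fin.castLE hmℓ i ≠ j := by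
          intro hcon
          have := congrArg Fin.val hcon
          simp [hj] at this
          omega
        refine (ExteriorAlgebra.ιMulti K ℓ).map_eq_zero_of_eq _ (i := Fin.castLE hmℓ i) (j := j) ?_ hne
        rw [Function.update_self, Function.update_of_ne hne]
      have hlastF : F (y (Fin.castLE hmℓ (Fin.last m))) = ExteriorAlgebra.ιMulti K ℓ y := by
        have : Fin.castLE hmℓ (Fin.last m) = j := by simp [hj, Fin.last]
        rw [hF, this, Function.update_eq_self]
      have hsum : F x = c (Fin.last m) • ExteriorAlgebra.ιMulti K ℓ y := by
        rw [← hc, map_sum]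
        rw [Finset.sum_eq_single (Fin.last m)]
        · rw [map_smul, hlastF]
        · intro i _ hne
          rw [map_smul, hterm i ?_, smul_zero]
          have := i.isLt
          have : (i : ℕ) ≠ m := fun hcon => hne (Fin.ext (by simp [Fin.last, hcon]))
          omega
        · intro hcon
          exact absurd (Finset.mem_univ _) hcon
      have hclast : c (Fin.last m) = 0 := by
        rw [hFx] at hsum
        rcases smul_eq_zero.1 hsum.symm with h | h
        · exact h
        · exact absurd h hy0
      -- now show membership
      rw [← hc]
      apply Submodule.sum_mem
      intro i _
      rcases Nat.lt_succ_iff_lt_or_eq.1 i.isLt with hi | hi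
      · rw [Submodule.restrictScalars_mem]
        exact Submodule.smul_mem _ _ (Submodule.subset_span ⟨Fin.castLE hmℓ i, hi, rfl⟩)
      · have : i = Fin.last m := Fin.ext (by simp [Fin.last, hi])
        rw [this, hclast, zero_smul]
        exact Submodule.zero_mem _
    exact step U' hU' y hy j hfinker

end step

/-- **Hrushovski's exterior algebra lemma** (Lemma 1.5 / Lemma A.1 of
Freitag–Moosa): if `k ⊆ K` are fields, `V` a `K`-vector space, `U` a
`k`-subspace of `V`, and for some `ℓ ≥ 1` the `k`-span of the set of
`ℓ`-fold wedge products of elements of `U` (taken in the exterior algebra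
of `V` over `K`) is a nonzero finite-dimensional `k`-vector space, then
`U` is finite-dimensional over `k`. -/
theorem span_wedge_finiteDimensional_of_finiteDimensional
    {k K V : Type*} [Field k] [Field K] [Algebra k K]
    [AddCommGroup V] [Module K V] [Module k V] [IsScalarTower k K V]
    (U : Submodule k V) (ℓ : ℕ) (hℓ : 1 ≤ ℓ)
    (B : Submodule k (ExteriorAlgebra K V))
    (hB : B = Submodule.span k
      {x : ExteriorAlgebra K V | ∃ u : Fin ℓ → V, (∀ i, u i ∈ U) ∧
        x = (List.ofFn fun i => ExteriorAlgebra.ι K (u i)).prod})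
    (hfin : FiniteDimensional k B) (hne : B ≠ ⊥) :
    FiniteDimensional k U := by
  classical
  have hex : ∃ u : Fin ℓ → V, (∀ i, u i ∈ U) ∧ ExteriorAlgebra.ιMulti K ℓ u ≠ 0 := by
    by_contra hcon
    push_neg at hcon
    apply hne
    rw [hB, Submodule.span_eq_bot]
    rintro x ⟨u, hu, rfl⟩
    rw [← ExteriorAlgebra.ιMulti_apply]
    exact hcon u hu
  obtain ⟨u, hu, hu0⟩ := hex
  obtain ⟨n, rfl⟩ : ∃ n, ℓ = n + 1 := ⟨ℓ - 1, by omega⟩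
  have hLI : LinearIndependent K u := aux_linearIndependent_of_ne_zero hu0
  have hLIt : LinearIndependent K (Fin.tail u) := hLI.comp Fin.succ (Fin.succ_injective n)
  set y : Fin (n+1) → V := u ∘ (finRotate (n+1)) with hydef
  have hymem : ∀ i, y i ∈ U := fun i => hu _
  have hy0 : ExteriorAlgebra.ιMulti K (n+1) y ≠ 0 := by
    have hperm := AlternatingMap.map_perm (ExteriorAlgebra.ιMulti K (n+1)) u (finRotate (n+1))
    rw [hydef, hperm]
    rcases Int.units_eq_one_or (Equiv.Perm.sign (finRotate (n+1))) with h | h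
    · rw [h, one_smul]; exact hu0
    · rw [h]
      intro hc
      have hc' : ((-1 : ℤˣ) : ℤ) • ExteriorAlgebra.ιMulti K (n+1) u = 0 := hc
      rw [Units.val_neg, Units.val_one, neg_smul, one_smul, neg_eq_zero] at hc'
      exact hu0 hc'
  set U₁ : Submodule k V := U ⊓ LinearMap.ker (slotMap (K := K) k (n+1) u 0) with hU₁
  have hU₁span : U₁ ≤
      (Submodule.span K (y '' {i : Fin (n+1) | (i : ℕ) < n})).restrictScalars k := by
    intro x hx
    obtain ⟨hxU, hxker⟩ := hx
    have h0 : ExteriorAlgebra.ιMulti K (n+1) (Fin.cons x (Fin.tail u)) = 0 := by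
      have hker0 := LinearMap.mem_ker.1 hxker
      rw [slotMap_apply] at hker0
      rwa [← Fin.cons_self_tail u, Fin.update_cons_zero] at hker0
    have hnLI : ¬ LinearIndependent K (Fin.cons x (Fin.tail u) : Fin (n+1) → V) :=
      fun hli => aux_ιMulti_ne_zero hli h0
    have hxspan : x ∈ Submodule.span K (Set.range (Fin.tail u)) := by
      by_contra hxs
      exact hnLI (linearIndependent_fin_cons.2 ⟨hLIt, hxs⟩)
    rw [Submodule.restrictScalars_mem]
    refine Submodule.span_mono ?_ hxspan
    rintro _ ⟨i, rfl⟩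
    refine ⟨i.castSucc, by simp, ?_⟩
    show u (finRotate (n+1) i.castSucc) = u i.succ
    rw [finRotate_succ_apply, Fin.coeSucc_eq_succ]
  have step : ∀ (U' : Submodule k V), U' ≤ U → ∀ y : Fin (n+1) → V,
      (∀ i, y i ∈ U) → ∀ j : Fin (n+1),
      FiniteDimensional k ↥(U' ⊓ LinearMap.ker (slotMap (K := K) k (n+1) y j)) →
      FiniteDimensional k ↥U' :=
    fun U' hU' y hy j hk => step_lemma U (n+1) B hB hfin U' hU' y hy j hk
  have hfinU₁ : FiniteDimensional k ↥U₁ :=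
    descent_lemma U (n+1) B hB hfin step n (by omega) U₁ inf_le_left y hymem hy0 hU₁span
  exact step U le_rfl u hu 0 hfinU₁
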